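/- If A, B ⊆ ℝ are measurable sets of positive Lebesgue measure, then the sumset (A × B) + S¹ ⊆ ℝ² has non-empty interior. -/

import Mathlib

open Pointwise

open MeasureTheory

open Real Set Filter Metric
open scoped NNReal ENNReal Topology

-- reflection-translation invariance
lemma volC (u : ℝ) (D : Set ℝ) : volume ((fun x => u - x) ⁻¹' D) = volume D := by
  have h : (fun x : ℝ => u - x) = (fun x : ℝ => u + x) ∘ (fun x : ℝ => -x) := by
    funext x; simp [sub_eq_add_neg]
  calc volume ((fun x => u - x) ⁻¹' D)
      = volume ((fun x : ℝ => -x) ⁻¹' ((fun x => u + x) ⁻¹' D)) := by rw [h, Set.preimage_comp]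
    _ = volume ((fun x => u + x) ⁻¹' D) := by
        simpa using Measure.measure_preimage_neg volume ((fun x => u + x) ⁻¹' D)
    _ = volume D := measure_preimage_add _ _ _

lemma sqrt3_lt_two : Real.sqrt 3 < 2 := by
  nlinarith [Real.sq_sqrt (show (0:ℝ) ≤ 3 by norm_num), Real.sqrt_nonneg 3]

lemma deriv_bound {x : ℝ} (hx : x ∈ Icc (1/2 : ℝ) (Real.sqrt 3 / 2)) :
    ‖1 / Real.sqrt (1 - x ^ 2)‖₊ ≤ 2 := by
  have hx0 : (0:ℝ) ≤ x := le_trans (by norm_num) hx.1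
  have hx1 : x ^ 2 ≤ 3 / 4 := by
    nlinarith [hx.2, Real.sq_sqrt (show (0:ℝ) ≤ 3 by norm_num), Real.sqrt_nonneg 3]
  have h2 : (1/2 : ℝ) ≤ Real.sqrt (1 - x ^ 2) := by
    have : Real.sqrt ((1/2)^2) ≤ Real.sqrt (1 - x ^ 2) := Real.sqrt_le_sqrt (by nlinarith)
    rwa [Real.sqrt_sq (by norm_num : (0:ℝ) ≤ 1/2)] at this
  have habs : |1 / Real.sqrt (1 - x ^ 2)| ≤ 2 := by
    rw [abs_of_nonneg (by positivity)]
    rw [div_le_iff₀ (by linarith)]; linarith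
  rw [← NNReal.coe_le_coe]
  simp only [coe_nnnorm, Real.norm_eq_abs, NNReal.coe_ofNat]
  exact habs

lemma ne_bounds {x : ℝ} (hx : x ∈ Icc (1/2 : ℝ) (Real.sqrt 3 / 2)) : x ≠ -1 ∧ x ≠ 1 := by
  have h1 := hx.1
  have h2 := hx.2
  have := sqrt3_lt_two
  constructor <;> intro h <;> subst h <;> linarith

lemma lips_arcsin : LipschitzOnWith 2 Real.arcsin (Icc (1/2 : ℝ) (Real.sqrt 3 / 2)) := by
  apply (convex_Icc _ _).lipschitzOnWith_of_nnnorm_hasDerivWithin_le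
    (f' := fun x => 1 / Real.sqrt (1 - x ^ 2))
  · intro x hx
    exact (Real.hasDerivAt_arcsin (ne_bounds hx).1 (ne_bounds hx).2).hasDerivWithinAt
  · intro x hx; exact deriv_bound hx

lemma lips_arccos : LipschitzOnWith 2 Real.arccos (Icc (1/2 : ℝ) (Real.sqrt 3 / 2)) := by
  apply (convex_Icc _ _).lipschitzOnWith_of_nnnorm_hasDerivWithin_le
    (f' := fun x => -(1 / Real.sqrt (1 - x ^ 2)))
  · intro x hx
    exact (Real.hasDerivAt_arccos (ne_bounds hx).1 (ne_bounds hx).2).hasDerivWithinAt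
  · intro x hx; rw [nnnorm_neg]; exact deriv_bound hx

lemma key_bound (f g : ℝ → ℝ) (I T : Set ℝ)
    (hg : LipschitzOnWith 2 g (Icc (1/2 : ℝ) (Real.sqrt 3 / 2)))
    (hfI : ∀ θ ∈ I, f θ ∈ Icc (1/2 : ℝ) (Real.sqrt 3 / 2))
    (hgf : ∀ θ ∈ I, g (f θ) = θ) :
    volume {θ ∈ I | f θ ∈ T} ≤ 2 * volume T := by
  have hsub : {θ ∈ I | f θ ∈ T} ⊆ g '' (T ∩ Icc (1/2 : ℝ) (Real.sqrt 3 / 2)) := by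
    rintro θ ⟨hθI, hθT⟩
    exact ⟨f θ, ⟨hθT, hfI θ hθI⟩, hgf θ hθI⟩
  calc volume {θ ∈ I | f θ ∈ T} ≤ volume (g '' (T ∩ Icc (1/2 : ℝ) (Real.sqrt 3 / 2))) :=
        measure_mono hsub
    _ = μH[1] (g '' (T ∩ Icc (1/2 : ℝ) (Real.sqrt 3 / 2))) := by
        rw [MeasureTheory.hausdorffMeasure_real]
    _ ≤ ((2 : ℝ≥0) : ℝ≥0∞) ^ (1:ℝ) * μH[1] (T ∩ Icc (1/2 : ℝ) (Real.sqrt 3 / 2)) :=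
        (hg.mono inter_subset_right).hausdorffMeasure_image_le zero_le_one
    _ ≤ 2 * volume T := by
        rw [MeasureTheory.hausdorffMeasure_real, ENNReal.rpow_one]
        have h1 : volume (T ∩ Icc (1/2 : ℝ) (Real.sqrt 3 / 2)) ≤ volume T :=
          measure_mono inter_subset_left
        have h2 : ((2 : ℝ≥0) : ℝ≥0∞) = 2 := by norm_num
        rw [h2]
        exact mul_le_mul_right h1 2

lemma density_pt (A : Set ℝ) (hAm : MeasurableSet A) (hA : 0 < volume A) :
    ∃ a₀ r₀ : ℝ, 0 < r₀ ∧ ∀ r : ℝ, 0 < r → r ≤ r₀ →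
      volume (Metric.closedBall a₀ r \ A) ≤ ENNReal.ofReal (r / 10) := by
  have hne : volume.restrict A ≠ 0 := by
    intro h
    have h2 : volume.restrict A univ = volume A := by
      simp [Measure.restrict_apply_univ]
    rw [h] at h2
    simp at h2
    rw [← h2] at hA
    exact lt_irrefl _ hA
  haveI : (ae (volume.restrict A)).NeBot := ae_neBot.mpr hne
  obtain ⟨a₀, ha₀⟩ := (Besicovitch.ae_tendsto_measure_inter_div volume A).exists
  have hc : ENNReal.ofReal (19/20) < 1 := by
    rw [← ENNReal.ofReal_one]
    exact (ENNReal.ofReal_lt_ofReal_iff (by norm_num)).mpr (by norm_num)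
  have hev : ∀ᶠ r in 𝓝[>] (0:ℝ),
      ENNReal.ofReal (19/20) < volume (A ∩ Metric.closedBall a₀ r) / volume (Metric.closedBall a₀ r) :=
    ha₀.eventually (eventually_gt_nhds hc)
  obtain ⟨ε, hε, hsub⟩ := mem_nhdsGT_iff_exists_Ioo_subset.mp hev
  refine ⟨a₀, ε/2, by simpa using hε, fun r hr0 hrε => ?_⟩
  have hmem : r ∈ Ioo (0:ℝ) ε := ⟨hr0, by have := mem_Ioi.mp hε; linarith⟩
  have hlt := hsub hmem
  have h2 : ENNReal.ofReal (19/20) * volume (Metric.closedBall a₀ r)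
      < volume (A ∩ Metric.closedBall a₀ r) := ENNReal.mul_lt_of_lt_div hlt
  have hcb : volume (Metric.closedBall a₀ r) = ENNReal.ofReal (2*r) := Real.volume_closedBall _ _
  have hfin : volume (A ∩ Metric.closedBall a₀ r) ≠ ⊤ := by
    refine ne_top_of_le_ne_top ?_ (measure_mono inter_subset_right)
    rw [hcb]; exact ENNReal.ofReal_ne_top
  have h3 : volume (Metric.closedBall a₀ r \ A)
      = volume (Metric.closedBall a₀ r) - volume (A ∩ Metric.closedBall a₀ r) := by
    rw [show Metric.closedBall a₀ r \ A = Metric.closedBall a₀ r \ (A ∩ Metric.closedBall a₀ r) by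
      rw [Set.diff_inter_self_eq_diff]]
    exact measure_diff inter_subset_right (hAm.inter measurableSet_closedBall).nullMeasurableSet hfin
  rw [h3, hcb]
  calc ENNReal.ofReal (2*r) - volume (A ∩ Metric.closedBall a₀ r)
      ≤ ENNReal.ofReal (2*r) - ENNReal.ofReal ((19/20) * (2*r)) := by
        apply tsub_le_tsub_left
        rw [hcb, ← ENNReal.ofReal_mul (by norm_num)] at h2
        exact h2.le
    _ = ENNReal.ofReal (2*r - (19/20) * (2*r)) := (ENNReal.ofReal_sub _ (by positivity)).symm
    _ ≤ ENNReal.ofReal (r/10) := ENNReal.ofReal_le_ofReal (by linarith)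

lemma lipschitz_sin' (x y : ℝ) : |Real.sin x - Real.sin y| ≤ |x - y| := by
  have h : LipschitzWith 1 Real.sin := by
    apply lipschitzWith_of_nnnorm_deriv_le Real.differentiable_sin
    intro x
    rw [Real.deriv_sin, ← NNReal.coe_le_coe]
    simpa [Real.norm_eq_abs] using Real.abs_cos_le_one x
  simpa [Real.dist_eq] using h.dist_le_mul x y

lemma lipschitz_cos' (x y : ℝ) : |Real.cos x - Real.cos y| ≤ |x - y| := by
  have h : LipschitzWith 1 Real.cos := by
    apply lipschitzWith_of_nnnorm_deriv_le Real.differentiable_cos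
    intro x
    rw [Real.deriv_cos, ← NNReal.coe_le_coe]
    simpa [Real.norm_eq_abs] using Real.abs_sin_le_one x
  simpa [Real.dist_eq] using h.dist_le_mul x y
theorem stmt_7 (A B : Set ℝ)
    (hAm : MeasurableSet A) (hBm : MeasurableSet B)
    (hA : 0 < volume A) (hB : 0 < volume B) :
    (interior ({p : EuclideanSpace ℝ (Fin 2) | p 0 ∈ A ∧ p 1 ∈ B} +
      Metric.sphere (0 : EuclideanSpace ℝ (Fin 2)) 1)).Nonempty := by
  obtain ⟨a₀, r₁, hr₁0, hA₀⟩ := density_pt A hAm hA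
  obtain ⟨b₀, r₂, hr₂0, hB₀⟩ := density_pt B hBm hB
  set C := {p : EuclideanSpace ℝ (Fin 2) | p 0 ∈ A ∧ p 1 ∈ B} +
      Metric.sphere (0 : EuclideanSpace ℝ (Fin 2)) 1 with hC
  set h : ℝ := min (min r₁ r₂) (1/5) / 2 with hh
  have hhpos : 0 < h := by positivity
  have hh1 : h ≤ 1/10 := by
    have : min (min r₁ r₂) (1/5) ≤ 1/5 := min_le_right _ _
    rw [hh]; linarith
  have hhr₁ : 2 * h ≤ r₁ := by
    have h1 : min (min r₁ r₂) (1/5) ≤ r₁ := le_trans (min_le_left _ _) (min_le_left _ _)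
    rw [hh]; linarith
  have hhr₂ : 2 * h ≤ r₂ := by
    have h1 : min (min r₁ r₂) (1/5) ≤ r₂ := le_trans (min_le_left _ _) (min_le_right _ _)
    rw [hh]; linarith
  set R : ℝ := 11 * h / 10 with hR
  have hR0 : 0 < R := by rw [hR]; positivity
  have hRr₁ : R ≤ r₁ := by rw [hR]; linarith
  have hRr₂ : R ≤ r₂ := by rw [hR]; linarith
  have hπ := Real.pi_gt_three
  set I : Set ℝ := Icc (Real.pi/4 - h) (Real.pi/4 + h) with hI
  have hrange : ∀ θ ∈ I, Real.pi/6 ≤ θ ∧ θ ≤ Real.pi/3 := by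
    intro θ hθ
    obtain ⟨h1, h2⟩ := hθ
    constructor <;> linarith
  have hcos_mem : ∀ θ ∈ I, Real.cos θ ∈ Icc (1/2 : ℝ) (Real.sqrt 3 / 2) := by
    intro θ hθ
    obtain ⟨h1, h2⟩ := hrange θ hθ
    constructor
    · rw [← Real.cos_pi_div_three]
      exact Real.cos_le_cos_of_nonneg_of_le_pi (by linarith) (by linarith) h2
    · rw [← Real.cos_pi_div_six]
      exact Real.cos_le_cos_of_nonneg_of_le_pi (by linarith) (by linarith) h1
  have hsin_mem : ∀ θ ∈ I, Real.sin θ ∈ Icc (1/2 : ℝ) (Real.sqrt 3 / 2) := by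
    intro θ hθ
    obtain ⟨h1, h2⟩ := hrange θ hθ
    constructor
    · rw [← Real.sin_pi_div_six]
      exact Real.sin_le_sin_of_le_of_le_pi_div_two (by linarith) (by linarith) h1
    · rw [← Real.sin_pi_div_three]
      exact Real.sin_le_sin_of_le_of_le_pi_div_two (by linarith) (by linarith) h2
  have harccos : ∀ θ ∈ I, Real.arccos (Real.cos θ) = θ := by
    intro θ hθ; obtain ⟨h1, h2⟩ := hrange θ hθ
    exact Real.arccos_cos (by linarith) (by linarith)
  have harcsin : ∀ θ ∈ I, Real.arcsin (Real.sin θ) = θ := by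
    intro θ hθ; obtain ⟨h1, h2⟩ := hrange θ hθ
    exact Real.arcsin_sin (by linarith) (by linarith)
  set u₀ : ℝ := a₀ + Real.cos (Real.pi/4) with hu₀
  set v₀ : ℝ := b₀ + Real.sin (Real.pi/4) with hv₀
  have hcont0 : Continuous fun p : EuclideanSpace ℝ (Fin 2) => p 0 := by fun_prop
  have hcont1 : Continuous fun p : EuclideanSpace ℝ (Fin 2) => p 1 := by fun_prop
  set U : Set (EuclideanSpace ℝ (Fin 2)) :=
    (fun p : EuclideanSpace ℝ (Fin 2) => p 0) ⁻¹' Metric.ball u₀ (h/10) ∩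
    (fun p : EuclideanSpace ℝ (Fin 2) => p 1) ⁻¹' Metric.ball v₀ (h/10) with hU
  have hUopen : IsOpen U :=
    (Metric.isOpen_ball.preimage hcont0).inter (Metric.isOpen_ball.preimage hcont1)
  have hUsub : U ⊆ C := by
    rintro p ⟨hp0, hp1⟩
    simp only [Set.mem_preimage, Metric.mem_ball, Real.dist_eq] at hp0 hp1
    set u : ℝ := p 0 with hu
    set v : ℝ := p 1 with hv
    set T₁ : Set ℝ := (fun x => u - x) ⁻¹' (Metric.closedBall a₀ R \ A) with hT₁
    set T₂ : Set ℝ := (fun x => v - x) ⁻¹' (Metric.closedBall b₀ R \ B) with hT₂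
    have key1 : volume {θ ∈ I | Real.cos θ ∈ T₁}
        ≤ ENNReal.ofReal (R/10) + ENNReal.ofReal (R/10) := by
      have hb := key_bound Real.cos Real.arccos I T₁ lips_arccos hcos_mem harccos
      rw [hT₁, volC u] at hb
      refine le_trans hb ?_
      have h2 := hA₀ R hR0 hRr₁
      calc 2 * volume (Metric.closedBall a₀ R \ A) ≤ 2 * ENNReal.ofReal (R/10) :=
            mul_le_mul_right h2 2
        _ = ENNReal.ofReal (R/10) + ENNReal.ofReal (R/10) := by rw [two_mul]
    have key2 : volume {θ ∈ I | Real.sin θ ∈ T₂}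
        ≤ ENNReal.ofReal (R/10) + ENNReal.ofReal (R/10) := by
      have hb := key_bound Real.sin Real.arcsin I T₂ lips_arcsin hsin_mem harcsin
      rw [hT₂, volC v] at hb
      refine le_trans hb ?_
      have h2 := hB₀ R hR0 hRr₂
      calc 2 * volume (Metric.closedBall b₀ R \ B) ≤ 2 * ENNReal.ofReal (R/10) :=
            mul_le_mul_right h2 2
        _ = ENNReal.ofReal (R/10) + ENNReal.ofReal (R/10) := by rw [two_mul]
    have hnon : {θ ∈ I | u - Real.cos θ ∈ A ∧ v - Real.sin θ ∈ B}.Nonempty := by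
      by_contra hemp
      rw [Set.not_nonempty_iff_eq_empty] at hemp
      have hcover : I ⊆ {θ ∈ I | Real.cos θ ∈ T₁} ∪ {θ ∈ I | Real.sin θ ∈ T₂} := by
        intro θ hθ
        have e3 : |Real.pi/4 - θ| ≤ h := by
          rw [abs_le]; obtain ⟨g1, g2⟩ := hθ; constructor <;> linarith
        by_cases h1 : u - Real.cos θ ∈ A
        · by_cases h2 : v - Real.sin θ ∈ B
          · exfalso
            have hmem : θ ∈ {θ ∈ I | u - Real.cos θ ∈ A ∧ v - Real.sin θ ∈ B} := ⟨hθ, h1, h2⟩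
            rw [hemp] at hmem; exact hmem
          · right
            refine ⟨hθ, ⟨?_, h2⟩⟩
            rw [Metric.mem_closedBall, Real.dist_eq]
            have e1 : v - Real.sin θ - b₀ = (v - v₀) + (Real.sin (Real.pi/4) - Real.sin θ) := by
              rw [hv₀]; ring
            rw [e1]
            have e2 := lipschitz_sin' (Real.pi/4) θ
            calc |(v - v₀) + (Real.sin (Real.pi/4) - Real.sin θ)|
                ≤ |v - v₀| + |Real.sin (Real.pi/4) - Real.sin θ| := abs_add_le _ _
              _ ≤ h/10 + h := by
                  have := le_trans e2 e3
                  linarith [le_of_lt hp1]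
              _ ≤ R := by rw [hR]; linarith
        · left
          refine ⟨hθ, ⟨?_, h1⟩⟩
          rw [Metric.mem_closedBall, Real.dist_eq]
          have e1 : u - Real.cos θ - a₀ = (u - u₀) + (Real.cos (Real.pi/4) - Real.cos θ) := by
            rw [hu₀]; ring
          rw [e1]
          have e2 := lipschitz_cos' (Real.pi/4) θ
          calc |(u - u₀) + (Real.cos (Real.pi/4) - Real.cos θ)|
              ≤ |u - u₀| + |Real.cos (Real.pi/4) - Real.cos θ| := abs_add_le _ _
            _ ≤ h/10 + h := by
                have := le_trans e2 e3
                linarith [le_of_lt hp0]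
            _ ≤ R := by rw [hR]; linarith
      have hvol : volume I ≤ volume {θ ∈ I | Real.cos θ ∈ T₁} + volume {θ ∈ I | Real.sin θ ∈ T₂} :=
        le_trans (measure_mono hcover) (measure_union_le _ _)
      have hIvol : volume I = ENNReal.ofReal (2*h) := by
        rw [hI, Real.volume_Icc]; congr 1; ring
      rw [hIvol] at hvol
      have hvol2 : ENNReal.ofReal (2*h) ≤ ENNReal.ofReal (4 * (R/10)) := by
        refine le_trans hvol (le_trans (add_le_add key1 key2) ?_)
        rw [← ENNReal.ofReal_add (by positivity) (by positivity),
            ← ENNReal.ofReal_add (by positivity) (by positivity)]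
        apply ENNReal.ofReal_le_ofReal; linarith
      have hfinal := (ENNReal.ofReal_le_ofReal_iff (by positivity)).mp hvol2
      rw [hR] at hfinal; linarith
    obtain ⟨θ, hθI, hθA, hθB⟩ := hnon
    set s : EuclideanSpace ℝ (Fin 2) :=
      (WithLp.equiv 2 (Fin 2 → ℝ)).symm ![Real.cos θ, Real.sin θ] with hs
    have hs0 : s 0 = Real.cos θ := rfl
    have hs1 : s 1 = Real.sin θ := rfl
    have hssphere : s ∈ Metric.sphere (0 : EuclideanSpace ℝ (Fin 2)) 1 := by
      rw [mem_sphere_zero_iff_norm, EuclideanSpace.norm_eq, Fin.sum_univ_two, hs0, hs1,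
        Real.norm_eq_abs, Real.norm_eq_abs, sq_abs, sq_abs, Real.cos_sq_add_sin_sq,
        Real.sqrt_one]
    rw [hC]
    refine Set.mem_add.mpr ⟨p - s, ⟨?_, ?_⟩, s, hssphere, by abel⟩
    · show (p - s) 0 ∈ A
      have hps : (p - s) 0 = p 0 - s 0 := rfl
      rw [hps, hs0, ← hu]; exact hθA
    · show (p - s) 1 ∈ B
      have hps : (p - s) 1 = p 1 - s 1 := rfl
      rw [hps, hs1, ← hv]; exact hθB
  refine ⟨(WithLp.equiv 2 (Fin 2 → ℝ)).symm ![u₀, v₀], interior_maximal hUsub hUopen ⟨?_, ?_⟩⟩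
  · show (WithLp.equiv 2 (Fin 2 → ℝ)).symm ![u₀, v₀] 0 ∈ Metric.ball u₀ (h/10)
    have : ((WithLp.equiv 2 (Fin 2 → ℝ)).symm ![u₀, v₀]) 0 = u₀ := rfl
    rw [Metric.mem_ball, this]
    simpa using by positivity
  · show (WithLp.equiv 2 (Fin 2 → ℝ)).symm ![u₀, v₀] 1 ∈ Metric.ball v₀ (h/10)
    have : ((WithLp.equiv 2 (Fin 2 → ℝ)).symm ![u₀, v₀]) 1 = v₀ := rfl
    rw [Metric.mem_ball, this]
    simpa using by positivity
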